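/- For all u, v > 0, θ(u+1, v+1) ≤ θ(u,v) + θ₁(u,v) + θ₂(u,v), where θ is the logarithmic mean and θ₁, θ₂ its partial derivatives. -/

import Mathlib

open Real Set Filter Topology

/-- The logarithmic mean, extended by `θ(s,s) = s` and `θ(s,0) = θ(0,t) = 0`. -/
noncomputable def logMean (s t : ℝ) : ℝ :=
  if s = t then s else if s = 0 ∨ t = 0 then 0 else (s - t) / (Real.log s - Real.log t)

/-- Partial derivative of the logarithmic mean in the first variable. -/
noncomputable def logMean₁ (s t : ℝ) : ℝ := deriv (fun x => logMean x t) s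

/-- Partial derivative of the logarithmic mean in the second variable. -/
noncomputable def logMean₂ (s t : ℝ) : ℝ := deriv (fun y => logMean s y) t

lemma logMean_comm (s t : ℝ) : logMean s t = logMean t s := by
  unfold logMean
  rcases eq_or_ne s t with h | h
  · simp [h]
  · rw [if_neg h, if_neg (Ne.symm h)]
    by_cases h0 : s = 0 ∨ t = 0
    · rw [if_pos h0, if_pos h0.symm]
    · rw [if_neg h0, if_neg (fun hc => h0 hc.symm),
        show t - s = -(s - t) by ring, show Real.log t - Real.log s = -(Real.log s - Real.log t) by ring,
        neg_div_neg_eq]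

lemma logMean_eq {s t : ℝ} (hs : 0 < s) (ht : 0 < t) (hst : s ≠ t) :
    logMean s t = (s - t) / (Real.log s - Real.log t) := by
  unfold logMean
  rw [if_neg hst, if_neg (by push_neg; exact ⟨hs.ne', ht.ne'⟩)]

lemma log_sub_ne {s t : ℝ} (hs : 0 < s) (ht : 0 < t) (hst : s ≠ t) :
    Real.log s - Real.log t ≠ 0 :=
  sub_ne_zero.2 fun h => hst (Real.log_injOn_pos (mem_Ioi.2 hs) (mem_Ioi.2 ht) h)

lemma hasDerivAt_logMean_fst {u v : ℝ} (hu : 0 < u) (hv : 0 < v) (huv : u ≠ v) :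
    HasDerivAt (fun s => logMean s v)
      ((1 * (Real.log u - Real.log v) - (u - v) * u⁻¹) / (Real.log u - Real.log v) ^ 2) u := by
  have hD := log_sub_ne hu hv huv
  have h1 : HasDerivAt (fun s : ℝ => s - v) 1 u := (hasDerivAt_id u).sub_const v
  have h2 : HasDerivAt (fun s : ℝ => Real.log s - Real.log v) u⁻¹ u :=
    (Real.hasDerivAt_log hu.ne').sub_const _
  refine (h1.div h2 hD).congr_of_eventuallyEq ?_
  filter_upwards [IsOpen.mem_nhds (isOpen_Ioi.inter isOpen_compl_singleton) ⟨hu, huv⟩] with s hs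
  exact logMean_eq hs.1 hv hs.2

lemma hasDerivAt_logMean_snd {u v : ℝ} (hu : 0 < u) (hv : 0 < v) (huv : u ≠ v) :
    HasDerivAt (fun t => logMean u t)
      (((-1) * (Real.log u - Real.log v) - (u - v) * (-v⁻¹)) / (Real.log u - Real.log v) ^ 2) v := by
  have hD := log_sub_ne hu hv huv
  have h1 : HasDerivAt (fun t : ℝ => u - t) (-1) v := by
    simpa using (hasDerivAt_id v).const_sub u
  have h2 : HasDerivAt (fun t : ℝ => Real.log u - Real.log t) (-v⁻¹) v := by
    simpa using (Real.hasDerivAt_log hv.ne').const_sub (Real.log u)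
  refine (h1.div h2 hD).congr_of_eventuallyEq ?_
  filter_upwards [IsOpen.mem_nhds (isOpen_Ioi.inter isOpen_compl_singleton) ⟨hv, Ne.symm huv⟩] with t ht
  exact logMean_eq hu ht.1 (Ne.symm ht.2)

lemma sum_partials {u v : ℝ} (hu : 0 < u) (hv : 0 < v) (huv : u ≠ v) :
    logMean₁ u v + logMean₂ u v
      = (u - v) ^ 2 / ((Real.log u - Real.log v) ^ 2 * (u * v)) := by
  have hD := log_sub_ne hu hv huv
  rw [logMean₁, logMean₂, (hasDerivAt_logMean_fst hu hv huv).deriv,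
    (hasDerivAt_logMean_snd hu hv huv).deriv]
  field_simp
  ring

lemma two_mul_div_le_log {a b : ℝ} (hb : 0 < b) (hab : b ≤ a) :
    2 * (a - b) / (a + b) ≤ Real.log a - Real.log b := by
  set ψ : ℝ → ℝ := fun x => Real.log x - 2 * (x - b) / (x + b) with hψ
  have hd : ∀ x : ℝ, b ≤ x →
      HasDerivAt ψ (x⁻¹ - (2 * (x + b) - 2 * (x - b) * 1) / (x + b) ^ 2) x := by
    intro x hx
    have hx0 : 0 < x := lt_of_lt_of_le hb hx
    have h2 : HasDerivAt (fun x : ℝ => 2 * (x - b)) 2 x := by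
      simpa using ((hasDerivAt_id x).sub_const b).const_mul 2
    have h3 : HasDerivAt (fun x : ℝ => x + b) 1 x := (hasDerivAt_id x).add_const b
    exact (Real.hasDerivAt_log hx0.ne').sub (h2.div h3 (by positivity))
  have hmono : MonotoneOn ψ (Ici b) := by
    apply monotoneOn_of_deriv_nonneg (convex_Ici b)
    · exact fun x hx => ((hd x hx).continuousAt).continuousWithinAt
    · intro x hx
      rw [interior_Ici] at hx
      exact ((hd x hx.le).differentiableAt).differentiableWithinAt
    · intro x hx
      rw [interior_Ici] at hx
      have hx0 : 0 < x := lt_of_lt_of_le hb hx.le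
      rw [(hd x hx.le).deriv, sub_nonneg, div_le_iff₀ (by positivity : (0:ℝ) < (x + b) ^ 2),
        inv_mul_eq_div, le_div_iff₀ hx0]
      nlinarith [sq_nonneg (x - b)]
  have := hmono (self_mem_Ici) (mem_Ici.2 hab) hab
  simp only [hψ] at this
  have hb0 : (2:ℝ) * (b - b) / (b + b) = 0 := by simp
  linarith [this, hb0]

lemma key_lt {u v : ℝ} (hv : 0 < v) (hvu : v < u) :
    logMean (u + 1) (v + 1) ≤ logMean u v + logMean₁ u v + logMean₂ u v := by
  have hu : 0 < u := hv.trans hvu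
  set D : ℝ → ℝ := fun x => Real.log (u + x) - Real.log (v + x) with hDdef
  have hDpos : ∀ x : ℝ, 0 ≤ x → 0 < D x := fun x hx =>
    sub_pos.2 (Real.log_lt_log (by linarith) (by linarith))
  set F : ℝ → ℝ := fun x => (u - v) ^ 2 / ((D x) ^ 2 * ((u + x) * (v + x))) with hFdef
  set f : ℝ → ℝ := fun x => (u - v) / D x with hfdef
  have hDd : ∀ x : ℝ, 0 ≤ x → HasDerivAt D ((u + x)⁻¹ - (v + x)⁻¹) x := by
    intro x hx
    have hux : (0:ℝ) < u + x := by linarith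
    have hvx : (0:ℝ) < v + x := by linarith
    have h1 : HasDerivAt (fun y : ℝ => Real.log (u + y)) (u + x)⁻¹ x := by
      simpa [Function.comp_def] using (Real.hasDerivAt_log hux.ne').comp x ((hasDerivAt_id x).const_add u)
    have h2 : HasDerivAt (fun y : ℝ => Real.log (v + y)) (v + x)⁻¹ x := by
      simpa [Function.comp_def] using (Real.hasDerivAt_log hvx.ne').comp x ((hasDerivAt_id x).const_add v)
    exact h1.sub h2
  have hf : ∀ x : ℝ, 0 ≤ x → HasDerivAt f (F x) x := by
    intro x hx
    have hux : (0:ℝ) < u + x := by linarith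
    have hvx : (0:ℝ) < v + x := by linarith
    have h := (hasDerivAt_const x (u - v)).div (hDd x hx) (hDpos x hx).ne'
    have hgen : ∀ L : ℝ, L ≠ 0 →
        (0 * L - (u - v) * ((u + x)⁻¹ - (v + x)⁻¹)) / L ^ 2
          = (u - v) ^ 2 / (L ^ 2 * ((u + x) * (v + x))) := by
      intro L hL
      field_simp
      ring
    rw [hgen (D x) (hDpos x hx).ne'] at h
    exact h
  -- G increasing
  set G : ℝ → ℝ := fun x => (D x) ^ 2 * ((u + x) * (v + x)) with hGdef
  have hGd : ∀ x : ℝ, 0 ≤ x → HasDerivAt G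
      (2 * D x ^ 1 * ((u + x)⁻¹ - (v + x)⁻¹) * ((u + x) * (v + x))
        + (D x) ^ 2 * (1 * (v + x) + (u + x) * 1)) x := by
    intro x hx
    have h1 : HasDerivAt (fun y : ℝ => (D y) ^ 2) (2 * D x ^ 1 * ((u + x)⁻¹ - (v + x)⁻¹)) x := by
      simpa using (hDd x hx).fun_pow 2
    have h2 : HasDerivAt (fun y : ℝ => (u + y) * (v + y)) (1 * (v + x) + (u + x) * 1) x :=
      ((hasDerivAt_id x).const_add u).mul ((hasDerivAt_id x).const_add v)
    exact h1.mul h2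
  have hGmono : MonotoneOn G (Icc 0 1) := by
    apply monotoneOn_of_deriv_nonneg (convex_Icc 0 1)
    · exact fun x hx => ((hGd x hx.1).continuousAt).continuousWithinAt
    · intro x hx
      rw [interior_Icc] at hx
      exact ((hGd x hx.1.le).differentiableAt).differentiableWithinAt
    · intro x hx
      rw [interior_Icc] at hx
      have hx0 : (0:ℝ) ≤ x := hx.1.le
      have hux : (0:ℝ) < u + x := by linarith
      have hvx : (0:ℝ) < v + x := by linarith
      rw [(hGd x hx0).deriv]
      have he : ((u + x)⁻¹ - (v + x)⁻¹) * ((u + x) * (v + x)) = (v + x) - (u + x) := by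
        field_simp
      have hkey : 2 * (u - v) ≤ D x * (u + v + 2 * x) := by
        have := two_mul_div_le_log hvx (by linarith : v + x ≤ u + x)
        rw [div_le_iff₀ (by linarith : (0:ℝ) < (u + x) + (v + x))] at this
        calc 2 * (u - v) = 2 * ((u + x) - (v + x)) := by ring
          _ ≤ (Real.log (u + x) - Real.log (v + x)) * ((u + x) + (v + x)) := this
          _ = D x * (u + v + 2 * x) := by rw [hDdef]; ring
      have hL := hDpos x hx0
      have he2 : 2 * D x ^ 1 * ((u + x)⁻¹ - (v + x)⁻¹) * ((u + x) * (v + x))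
          = 2 * D x * (v - u) := by
        rw [show 2 * D x ^ 1 * ((u + x)⁻¹ - (v + x)⁻¹) * ((u + x) * (v + x))
            = 2 * D x ^ 1 * (((u + x)⁻¹ - (v + x)⁻¹) * ((u + x) * (v + x))) by ring, he]
        ring
      rw [he2]
      nlinarith [mul_nonneg hL.le (sub_nonneg.2 hkey)]
  obtain ⟨c, hc, hceq⟩ := exists_hasDerivAt_eq_slope f F one_pos
    (fun x hx => ((hf x hx.1).continuousAt).continuousWithinAt)
    (fun x hx => hf x hx.1.le)
  have hG0 : (0:ℝ) < G 0 := by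
    have := hDpos 0 le_rfl
    have : (0:ℝ) < (D 0) ^ 2 := by positivity
    have hp : (0:ℝ) < (u + 0) * (v + 0) := by positivity
    exact mul_pos this hp
  have hGc : G 0 ≤ G c := hGmono (left_mem_Icc.2 zero_le_one) ⟨hc.1.le, hc.2.le⟩ hc.1.le
  have hFle : F c ≤ F 0 := by
    rw [hFdef]
    exact div_le_div_of_nonneg_left (by positivity) hG0 hGc
  have hf1 : f 1 = logMean (u + 1) (v + 1) := by
    rw [logMean_eq (by linarith) (by linarith) (by intro h; exact (hvu.ne') (by linarith))]
    rw [hfdef]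
    simp only [hDdef]
    rw [show u + 1 - (v + 1) = u - v by ring]
  have hf0 : f 0 = logMean u v := by
    rw [logMean_eq hu hv hvu.ne', hfdef]
    simp [hDdef]
  have hF0 : F 0 = logMean₁ u v + logMean₂ u v := by
    rw [sum_partials hu hv hvu.ne', hFdef]
    simp [hDdef]
  norm_num at hceq
  rw [← hf1, ← hf0]
  linarith [hFle, hceq, hF0]

-- diagonal derivative
lemma phi_hasDerivAt :
    HasDerivAt (fun t : ℝ => if t = 0 then 1 else (Real.exp t - 1) / t) (1 / 2 : ℝ) 0 := by
  rw [hasDerivAt_iff_tendsto_slope, ← tendsto_sub_nhds_zero_iff]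
  apply squeeze_zero_norm' (a := fun t : ℝ => 2 / 9 * |t|)
  · have hne : ∀ᶠ t : ℝ in 𝓝[≠] (0:ℝ), t ≠ 0 := by
      filter_upwards [self_mem_nhdsWithin] with t ht
      exact ht
    have hsmall : ∀ᶠ t : ℝ in 𝓝[≠] (0:ℝ), |t| ≤ 1 := by
      have : ∀ᶠ t : ℝ in 𝓝 (0:ℝ), |t| ≤ 1 := by
        have := Metric.ball_mem_nhds (0:ℝ) one_pos
        filter_upwards [this] with t ht
        rw [Metric.mem_ball, Real.dist_eq, sub_zero] at ht
        exact ht.le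
      exact this.filter_mono nhdsWithin_le_nhds
    filter_upwards [hne, hsmall] with t ht h1
    have ht2 : (0:ℝ) < t ^ 2 := by positivity
    have hb := Real.exp_bound h1 (by norm_num : 0 < 3)
    have hsum : (∑ m ∈ Finset.range 3, t ^ m / (m.factorial : ℝ)) = 1 + t + t ^ 2 / 2 := by
      simp [Finset.sum_range_succ]
    rw [hsum] at hb
    have hb' : |Real.exp t - (1 + t + t ^ 2 / 2)| ≤ |t| ^ 3 * (2 / 9) := by
      calc |Real.exp t - (1 + t + t ^ 2 / 2)| ≤ |t| ^ 3 * ((3:ℕ).succ / ((3:ℕ).factorial * (3:ℕ)):ℝ) := hb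
        _ = |t| ^ 3 * (2 / 9) := by norm_num [Nat.factorial]
    have hsl : slope (fun t : ℝ => if t = 0 then 1 else (Real.exp t - 1) / t) 0 t - 1 / 2
        = (Real.exp t - (1 + t + t ^ 2 / 2)) / t ^ 2 := by
      rw [slope_def_field]
      simp only [if_neg ht, if_pos rfl]
      field_simp
      rw [if_pos trivial]
      ring
    rw [hsl, Real.norm_eq_abs, abs_div, abs_pow, sq_abs]
    rw [div_le_iff₀ ht2]
    have habs : |t| * t ^ 2 = |t| ^ 3 := by
      rw [← sq_abs t]; ring
    nlinarith [hb', abs_nonneg t]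
  · have : Filter.Tendsto (fun t : ℝ => 2 / 9 * |t|) (𝓝 (0:ℝ)) (𝓝 (2 / 9 * |(0:ℝ)|)) :=
      (continuous_abs.tendsto 0).const_mul _
    simpa using this.mono_left nhdsWithin_le_nhds

lemma hasDerivAt_diag {u : ℝ} (hu : 0 < u) :
    HasDerivAt (fun x => logMean x u) (1 / 2 : ℝ) u := by
  set φ : ℝ → ℝ := fun t => if t = 0 then 1 else (Real.exp t - 1) / t with hφ
  have hψ : HasDerivAt (fun x : ℝ => Real.log x - Real.log u) u⁻¹ u :=
    (Real.hasDerivAt_log hu.ne').sub_const _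
  have h0 : Real.log u - Real.log u = 0 := sub_self _
  have hcomp : HasDerivAt (fun x : ℝ => u * φ (Real.log x - Real.log u)) (u * (1 / 2 * u⁻¹)) u := by
    have hphi : HasDerivAt φ (1 / 2 : ℝ) (Real.log u - Real.log u) := by
      rw [h0]; exact phi_hasDerivAt
    exact (hphi.comp u hψ).const_mul u
  have hval : u * (1 / 2 * u⁻¹) = (1 / 2 : ℝ) := by
    field_simp
  rw [hval] at hcomp
  refine hcomp.congr_of_eventuallyEq ?_
  filter_upwards [IsOpen.mem_nhds isOpen_Ioi hu] with x hx
  have hx0 : (0:ℝ) < x := hx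
  rcases eq_or_ne x u with rfl | hxu
  · simp [logMean, hφ, h0]
  · have ht : Real.log x - Real.log u ≠ 0 := log_sub_ne hx0 hu hxu
    rw [logMean_eq hx0 hu hxu]
    simp only [hφ, if_neg ht]
    rw [Real.exp_sub, Real.exp_log hx0, Real.exp_log hu]
    field_simp

lemma flip₁ (u v : ℝ) : logMean₁ u v = logMean₂ v u := by
  simp only [logMean₁, logMean₂]
  congr 1
  funext x
  exact logMean_comm x v

theorem logMean_add_one_le (u v : ℝ) (hu : 0 < u) (hv : 0 < v) :
    logMean (u + 1) (v + 1) ≤ logMean u v + logMean₁ u v + logMean₂ u v := by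
  rcases lt_trichotomy u v with h | rfl | h
  · have hk := key_lt hu h
    rw [logMean_comm (v + 1) (u + 1), logMean_comm v u, flip₁ v u, ← flip₁ u v] at hk
    linarith
  · have h1 : logMean₁ u u = 1 / 2 := (hasDerivAt_diag hu).deriv
    have h2 : logMean₂ u u = 1 / 2 := by
      rw [← flip₁ u u]; exact h1
    have hL : logMean (u + 1) (u + 1) = u + 1 := by simp [logMean]
    have hM : logMean u u = u := by simp [logMean]
    rw [hL, hM, h1, h2]
    linarith
  · exact key_lt hv h
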